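/- Let k be a fixed positive integer and let r = π(k) be the number of primes at most k. If there exists a logarithm of length k, then there exists a ℤ-tiling of ℤ^r by the cluster C_k. Moreover, the tiling may be taken to be a sublattice L of ℤ^r of index k, namely the kernel of the group homomorphism φ : ℤ^r → ℤ/kℤ sending the j-th standard basis vector to f(q_j), where f is the given logarithm and q_1 < … < q_r are the primes at most k. -/

import Mathlib

/-- A logarithmic function of length `k`: `f (a*b) = f a + f b` whenever
`a, b ∈ {1, …, k}` and `a*b ≤ k`. -/
def IsLogFun (k : ℕ) (f : ℕ → ZMod k) : Prop :=
  ∀ a b : ℕ, 1 ≤ a → 1 ≤ b → a ≤ k → b ≤ k → a * b ≤ k → f (a * b) = f a + f b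

/-- A logarithm of length `k` is a logarithmic function that is a bijection
from `{1, …, k}` to `ℤ/kℤ`. -/
def IsLogarithm (k : ℕ) (f : ℕ → ZMod k) : Prop :=
  IsLogFun k f ∧ Set.BijOn f (Set.Icc 1 k) Set.univ

/-- A special KM-logarithm of length `k`: a logarithm such that either `k` is odd,
or `k` is even and `f m` is an even element of `ℤ/kℤ` for every divisor `m` of `k/2`. -/
def IsSpecialKM (k : ℕ) (f : ℕ → ZMod k) : Prop :=
  IsLogarithm k f ∧ (Even k → ∀ m : ℕ, m ∣ k / 2 → ∃ y : ZMod k, f m = y + y)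

/-- The set of primes in `{1, …, k}`. -/
def primesUpTo (k : ℕ) : Finset ℕ := (Finset.range (k + 1)).filter Nat.Prime

/-- The cluster `C_k ⊆ ℤ^{π(k)}`: points with nonnegative coordinates
`(i_q)_q` (indexed by the primes `q ≤ k`) such that `∏ q ^ i_q ≤ k`. -/
def Cluster (k : ℕ) : Set (primesUpTo k → ℤ) :=
  {v | (∀ q, 0 ≤ v q) ∧ (∏ q : primesUpTo k, (q : ℕ) ^ (v q).toNat) ≤ k}

/-- A `ℤ`-tiling of `ℤ^{π(k)}` by the cluster `C_k`: the translates `x + C_k`,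
`x ∈ L`, are pairwise disjoint with union everything; equivalently every point
lies in exactly one translate. -/
def IsZTiling (k : ℕ) (L : Set (primesUpTo k → ℤ)) : Prop :=
  ∀ z : primesUpTo k → ℤ, ∃! x : primesUpTo k → ℤ, x ∈ L ∧ z - x ∈ Cluster k

/-- If a logarithm of length `k` exists then there is a `ℤ`-tiling of
`ℤ^{π(k)}` by `C_k`; moreover the tiling may be taken to be the kernel of the
homomorphism `φ : ℤ^{π(k)} → ℤ/kℤ` sending the basis vector at prime `q` to `f q`,
a sublattice of index `k`. -/

lemma mem_primesUpTo {k q : ℕ} (h : q ∈ primesUpTo k) : q.Prime ∧ q ≤ k := by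
  simp only [primesUpTo, Finset.mem_filter, Finset.mem_range, Nat.lt_succ_iff] at h
  tauto

lemma primesUpTo_mem {k q : ℕ} (h1 : q.Prime) (h2 : q ≤ k) : q ∈ primesUpTo k := by
  simp only [primesUpTo, Finset.mem_filter, Finset.mem_range, Nat.lt_succ_iff]
  exact ⟨h2, h1⟩

lemma prod_fact' (k n : ℕ) (hn : 0 < n) (hnk : n ≤ k) :
    ∏ q : primesUpTo k, (q : ℕ) ^ (n.factorization (q : ℕ)) = n := by
  have h := Nat.factorization_prod_pow_eq_self hn.ne'
  rw [Finset.prod_coe_sort (primesUpTo k) (fun q => q ^ n.factorization q) (M := ℕ)]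
  have key : ∏ q ∈ primesUpTo k, q ^ n.factorization q
      = ∏ q ∈ n.factorization.support, q ^ n.factorization q := by
    refine (Finset.prod_subset ?_ ?_).symm
    · intro q hq
      rw [Nat.support_factorization] at hq
      exact primesUpTo_mem (Nat.prime_of_mem_primeFactors hq)
        (le_trans (Nat.le_of_dvd hn (Nat.dvd_of_mem_primeFactors hq)) hnk)
    · intro q _ hq
      rw [Finsupp.notMem_support_iff.mp hq, pow_zero]
  rw [key]
  exact h

lemma fact_prod' (k : ℕ) (v : primesUpTo k → ℕ) (q₀ : primesUpTo k) :
    (∏ q : primesUpTo k, (q : ℕ) ^ (v q)).factorization (q₀ : ℕ) = v q₀ := by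
  have hne : ∀ q ∈ (Finset.univ : Finset (primesUpTo k)), ((q : ℕ) ^ (v q)) ≠ 0 :=
    fun q _ => pow_ne_zero _ (mem_primesUpTo q.2).1.pos.ne'
  rw [Nat.factorization_prod hne]
  have : ∀ q : primesUpTo k, ((q : ℕ) ^ (v q)).factorization
      = Finsupp.single (q : ℕ) (v q) :=
    fun q => (mem_primesUpTo q.2).1.factorization_pow
  rw [Finset.sum_congr rfl (fun q _ => this q)]
  rw [Finset.sum_apply']
  rw [Finset.sum_eq_single q₀]
  · simp
  · intro q _ hq
    exact Finsupp.single_eq_of_ne' (fun h => hq (Subtype.coe_injective h))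
  · simp

lemma flog' (k : ℕ) (hk : 0 < k) (f : ℕ → ZMod k) (hf : IsLogFun k f) :
    ∀ n, 0 < n → n ≤ k →
      f n = ∑ q : primesUpTo k, (n.factorization (q : ℕ)) • f (q : ℕ) := by
  intro n
  induction n using Nat.strong_induction_on with
  | _ n ih =>
    intro hn hnk
    rcases eq_or_lt_of_le (show 1 ≤ n from hn) with h1 | h1
    · -- n = 1
      have h1' : n = 1 := h1.symm
      subst h1'
      have hf1 : f 1 = f 1 + f 1 := by
        have := hf 1 1 le_rfl le_rfl hk hk (by simpa using Nat.succ_le_of_lt hk)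
        simpa using this
      have : f 1 = 0 := left_eq_add.mp hf1
      simp [this]
    · -- n ≥ 2
      have hn2 : 2 ≤ n := h1
      set p := n.minFac with hp_def
      have hp : p.Prime := Nat.minFac_prime (by omega)
      obtain ⟨m, hm⟩ := Nat.minFac_dvd n
      have hm0 : 0 < m := Nat.pos_of_ne_zero (fun h => by simp [h] at hm; omega)
      have hpn : p ≤ n := Nat.minFac_le hn
      have hmn : m < n := by
        have : 1 < p := hp.one_lt
        nlinarith [hm]
      have hfn : f n = f p + f m := by
        rw [hm]
        exact hf p m hp.one_lt.le hm0 (le_trans hpn hnk)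
          (le_trans (le_of_lt hmn) hnk) (hm ▸ hnk)
      have hfact : n.factorization = Finsupp.single p 1 + m.factorization := by
        rw [hm, Nat.factorization_mul hp.pos.ne' hm0.ne', hp.factorization]
      have hpk : p ∈ primesUpTo k := primesUpTo_mem hp (le_trans hpn hnk)
      have hsingle : ∑ q : primesUpTo k, ((Finsupp.single p 1 : ℕ →₀ ℕ) (q : ℕ)) • f (q : ℕ)
          = f p := by
        rw [Finset.sum_eq_single (⟨p, hpk⟩ : primesUpTo k)]
        · simp
        · intro q _ hq
          have : (q : ℕ) ≠ p := fun h => hq (Subtype.ext h)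
          rw [Finsupp.single_eq_of_ne' (Ne.symm this)]
          simp
        · simp
      calc f n = f p + f m := hfn
        _ = (∑ q : primesUpTo k, ((Finsupp.single p 1 : ℕ →₀ ℕ) (q : ℕ)) • f (q : ℕ))
            + ∑ q : primesUpTo k, (m.factorization (q : ℕ)) • f (q : ℕ) := by
            rw [hsingle, ih m hmn hm0 (le_trans (le_of_lt hmn) hnk)]
        _ = ∑ q : primesUpTo k, (n.factorization (q : ℕ)) • f (q : ℕ) := by
            rw [← Finset.sum_add_distrib]
            refine Finset.sum_congr rfl fun q _ => ?_
            rw [hfact]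
            simp [add_smul]


theorem stmt_10 (k : ℕ) (hk : 0 < k) (f : ℕ → ZMod k) (hf : IsLogarithm k f) :
    IsZTiling k {v : primesUpTo k → ℤ | ∑ q : primesUpTo k, (v q) • f (q : ℕ) = 0} ∧
    -- `φ` is surjective onto `ℤ/kℤ`, so its kernel is a sublattice of index `k`
    Function.Surjective (fun v : primesUpTo k → ℤ => ∑ q : primesUpTo k, (v q) • f (q : ℕ)) ∧
    ∃ L : Set (primesUpTo k → ℤ), IsZTiling k L := by
  obtain ⟨hlf, hbij⟩ := hf
  set φ : (primesUpTo k → ℤ) → ZMod k := fun v => ∑ q : primesUpTo k, (v q) • f (q : ℕ)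
    with hφ_def
  have hφsub : ∀ v w, φ (v - w) = φ v - φ w := by
    intro v w
    simp only [hφ_def, Pi.sub_apply, sub_smul, Finset.sum_sub_distrib]
  -- φ restricted to the cluster, as f of the product
  have hφcluster : ∀ c ∈ Cluster k, φ c = f (∏ q : primesUpTo k, (q : ℕ) ^ (c q).toNat) := by
    intro c hc
    obtain ⟨hc0, hck⟩ := hc
    set n : ℕ := ∏ q : primesUpTo k, (q : ℕ) ^ (c q).toNat with hn_def
    have hn0 : 0 < n := Finset.prod_pos fun q _ =>
      pow_pos (mem_primesUpTo q.2).1.pos _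
    have hfact : ∀ q : primesUpTo k, n.factorization (q : ℕ) = (c q).toNat :=
      fun q => fact_prod' k (fun q => (c q).toNat) q
    rw [flog' k hk f hlf n hn0 hck]
    refine (Finset.sum_congr rfl fun q _ => ?_).symm
    rw [hfact q]
    rw [← natCast_zsmul, Int.toNat_of_nonneg (hc0 q)]
  have key : ∀ y : ZMod k, ∃! c : primesUpTo k → ℤ, c ∈ Cluster k ∧ φ c = y := by
    intro y
    obtain ⟨n, hn, hfn⟩ := hbij.2.2 (Set.mem_univ y)
    obtain ⟨hn1, hnk⟩ := hn
    refine ⟨fun q => (n.factorization (q : ℕ) : ℤ), ⟨⟨fun q => Int.natCast_nonneg _, ?_⟩, ?_⟩, ?_⟩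
    · simp only [Int.toNat_natCast]
      rw [prod_fact' k n hn1 hnk]
      exact hnk
    · have hcl : (fun q : primesUpTo k => (n.factorization (q : ℕ) : ℤ)) ∈ Cluster k := by
        refine ⟨fun q => Int.natCast_nonneg _, ?_⟩
        simp only [Int.toNat_natCast]
        rw [prod_fact' k n hn1 hnk]
        exact hnk
      rw [hφcluster _ hcl]
      simp only [Int.toNat_natCast]
      rw [prod_fact' k n hn1 hnk, hfn]
    · rintro c ⟨hcC, hcφ⟩
      set n' : ℕ := ∏ q : primesUpTo k, (q : ℕ) ^ (c q).toNat with hn'_def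
      have hn'0 : 0 < n' := Finset.prod_pos fun q _ =>
        pow_pos (mem_primesUpTo q.2).1.pos _
      have hfn' : f n' = y := by rw [← hφcluster c hcC, hcφ]
      have hn'mem : n' ∈ Set.Icc 1 k := ⟨hn'0, hcC.2⟩
      have hnn' : n' = n := hbij.2.1 hn'mem ⟨hn1, hnk⟩ (by rw [hfn', hfn])
      funext q
      have := fact_prod' k (fun q => (c q).toNat) q
      rw [← hn'_def] at this
      rw [hnn'] at this
      rw [this]
      exact (Int.toNat_of_nonneg (hcC.1 q)).symm
  have tiling : IsZTiling k {v : primesUpTo k → ℤ |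
      ∑ q : primesUpTo k, (v q) • f (q : ℕ) = 0} := by
    intro z
    obtain ⟨c, ⟨hcC, hcφ⟩, huniq⟩ := key (φ z)
    refine ⟨z - c, ⟨?_, ?_⟩, ?_⟩
    · show φ (z - c) = 0
      rw [hφsub, hcφ, sub_self]
    · have : z - (z - c) = c := by ring
      rw [this]; exact hcC
    · rintro x ⟨hx0, hxc⟩
      have hφx : φ x = 0 := hx0
      have hφzx : φ (z - x) = φ z := by rw [hφsub, hφx, sub_zero]
      have := huniq (z - x) ⟨hxc, hφzx⟩
      have hx : x = z - c := by rw [← this]; ring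
      exact hx
  refine ⟨tiling, ?_, ⟨_, tiling⟩⟩
  intro y
  obtain ⟨c, ⟨_, hcφ⟩, _⟩ := key y
  exact ⟨c, hcφ⟩
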